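/- Let L₁, L₂ be finite Galois extensions of K inside a separable closure, L₀ = L₁ ∩ L₂, and suppose a pair (a₁, a₂) is a 2-code both for (L₁, L₂, σ₁, σ₂, α₀, α₁, α₂) and for (L₁, L₂, τ₁, τ₂, β₀, β₁, β₂). Then there exists ρ ∈ Gal(L₁L₂/K) such that τ₁ = ρ|_{L₁} σ₁ ρ|_{L₁}⁻¹ and τ₂ = ρ|_{L₂} σ₂ ρ|_{L₂}⁻¹ (componentwise on the tuples σᵢ). -/

import Mathlib

open Polynomial IntermediateField

private lemma myAlgHomExt {K M N : Type*} [Field K] [Field M] [Algebra K M]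
    [Semiring N] [Algebra K N] {α : M} (hα : IsIntegral K α)
    {f g : ↥(adjoin K {α}) →ₐ[K] N}
    (h : f (AdjoinSimple.gen K α) = g (AdjoinSimple.gen K α)) : f = g :=
  PowerBasis.algHom_ext (adjoin.powerBasis hα) (by rwa [adjoin.powerBasis_gen])

private lemma myAevalMem {K M : Type*} [Field K] [Field M] [Algebra K M]
    {S : IntermediateField K M} {α : M} (hα : α ∈ S) (p : K[X]) : aeval α p ∈ S := by
  have h : aeval (algebraMap S M ⟨α, hα⟩) p = algebraMap S M (aeval (⟨α, hα⟩ : S) p) :=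
    aeval_algebraMap_apply M (⟨α, hα⟩ : S) p
  simp only [IntermediateField.algebraMap_apply] at h
  rw [h]
  exact (aeval (⟨α, hα⟩ : S) p).2

private lemma myMemAdjoinMap {K M : Type*} [Field K] [Field M] [Algebra K M]
    {E : IntermediateField K M} {a : ↥E} {x : ↥E} :
    x ∈ adjoin K {a} ↔ (x : M) ∈ adjoin K {(a : M)} := by
  constructor
  · intro hx
    have := IntermediateField.adjoin_map K {a} E.val
    rw [Set.image_singleton] at this
    show (x : M) ∈ IntermediateField.adjoin K {(E.val a : M)}
    rw [← this]
    exact ⟨x, hx, rfl⟩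
  · intro hx
    have := IntermediateField.adjoin_map K {a} E.val
    rw [Set.image_singleton] at this
    replace hx : (x : M) ∈ IntermediateField.adjoin K {(E.val a : M)} := hx
    rw [← this] at hx
    obtain ⟨y, hy, hyx⟩ := hx
    have : y = x := Subtype.ext hyx
    rwa [← this]

set_option maxHeartbeats 2000000 in
set_option synthInstance.maxHeartbeats 1000000 in
private lemma existsAut {K M : Type*} [Field K] [Field M] [Algebra K M]
    (L₁ L₂ : IntermediateField K M)
    [FiniteDimensional K L₁] [FiniteDimensional K L₂]
    [IsGalois K L₁] [IsGalois K L₂]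
    {α₀ α₁ α₂ β₀ β₁ β₂ : M}
    (hα₁ : α₁ ∈ L₁) (hβ₁ : β₁ ∈ L₁) (hα₂ : α₂ ∈ L₂) (hβ₂ : β₂ ∈ L₂)
    (hgenα₁ : adjoin K {α₁} = L₁)
    (hgenα₂ : adjoin K {α₂} = L₂)
    (hgenα₀ : adjoin K {α₀} = L₁ ⊓ L₂)
    (hmin₁ : minpoly K α₁ = minpoly K β₁)
    (hmin₂ : minpoly K α₂ = minpoly K β₂)
    (hc₀₁ : ∃ h : K[X], α₀ = aeval α₁ h ∧ β₀ = aeval β₁ h)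
    (hc₀₂ : ∃ h : K[X], α₀ = aeval α₂ h ∧ β₀ = aeval β₂ h) :
    ∃ ρ : ↥(L₁ ⊔ L₂) ≃ₐ[K] ↥(L₁ ⊔ L₂),
      (ρ ⟨α₁, (le_sup_left : L₁ ≤ L₁ ⊔ L₂) hα₁⟩ : M) = β₁ ∧
      (ρ ⟨α₂, (le_sup_right : L₂ ≤ L₁ ⊔ L₂) hα₂⟩ : M) = β₂ := by
  obtain ⟨h₁, hc11, hc12⟩ := hc₀₁
  obtain ⟨h₂, hc21, hc22⟩ := hc₀₂
  set E := L₁ ⊔ L₂ with hE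
  have hα₀L : α₀ ∈ L₁ := hc11 ▸ myAevalMem hα₁ h₁
  have hβ₀L : β₀ ∈ L₁ := hc12 ▸ myAevalMem hβ₁ h₁
  set a₁ : ↥E := ⟨α₁, (le_sup_left : L₁ ≤ E) hα₁⟩ with ha₁
  set b₁ : ↥E := ⟨β₁, (le_sup_left : L₁ ≤ E) hβ₁⟩ with hb₁
  set a₂ : ↥E := ⟨α₂, (le_sup_right : L₂ ≤ E) hα₂⟩ with ha₂
  set b₂ : ↥E := ⟨β₂, (le_sup_right : L₂ ≤ E) hβ₂⟩ with hb₂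
  set a₀ : ↥E := ⟨α₀, (le_sup_left : L₁ ≤ E) hα₀L⟩ with ha₀
  set b₀ : ↥E := ⟨β₀, (le_sup_left : L₁ ≤ E) hβ₀L⟩ with hb₀
  haveI : FiniteDimensional K ↥E := IntermediateField.finiteDimensional_sup L₁ L₂
  -- minpoly transfers
  have hvalinj : Function.Injective (E.val) := E.val.injective
  have hminE (x : ↥E) : minpoly K x = minpoly K (x : M) :=
    (minpoly.algHom_eq E.val hvalinj x).symm
  have hminE₁ : minpoly K a₁ = minpoly K b₁ := by
    rw [hminE, hminE]; exact hmin₁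
  have hminE₂ : minpoly K a₂ = minpoly K b₂ := by
    rw [hminE, hminE]; exact hmin₂
  have hintK (x : ↥E) : IsIntegral K x := IsIntegral.of_finite K x
  -- aeval relations inside E
  have haev (x : ↥E) (p : K[X]) : (aeval x p : M) = aeval (x : M) p := by
    exact (aeval_algHom_apply E.val x p).symm ▸ rfl
  have ha₀eval : a₀ = aeval a₁ h₁ := hvalinj (by show (a₀ : M) = ((aeval a₁ h₁ : ↥E) : M); rw [haev]; exact hc11)
  have hb₀eval : b₀ = aeval b₁ h₁ := hvalinj (by show (b₀ : M) = ((aeval b₁ h₁ : ↥E) : M); rw [haev]; exact hc12)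
  have ha₀eval₂ : a₀ = aeval a₂ h₂ := hvalinj (by show (a₀ : M) = ((aeval a₂ h₂ : ↥E) : M); rw [haev]; exact hc21)
  have hb₀eval₂ : b₀ = aeval b₂ h₂ := hvalinj (by show (b₀ : M) = ((aeval b₂ h₂ : ↥E) : M); rw [haev]; exact hc22)
  -- the twisted embedding of K⟮a₁⟯
  set F₁ : IntermediateField K ↥E := adjoin K {a₁} with hF₁
  let e₁ := minpoly.algEquiv (hintK a₁).isAlgebraic hminE₁
  let gAlg : ↥F₁ →ₐ[K] ↥E := (adjoin K {b₁}).val.comp e₁.toAlgHom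
  have hg_gen : gAlg (AdjoinSimple.gen K a₁) = b₁ := by
    show (adjoin K {b₁}).val (e₁ (AdjoinSimple.gen K a₁)) = b₁
    rw [minpoly.algEquiv_apply]
    rfl
  have hintF₁ : IsIntegral ↥F₁ a₂ := (hintK a₂).tower_top
  set P := minpoly ↥F₁ a₂ with hP
  have hC1 : ∀ n, (F₁.val (P.coeff n) : ↥E) ∈ adjoin K {a₀} := by
    intro n
    haveI : FiniteDimensional K ↥L₂ := ‹_›
    let v1 : ↥F₁ →+* M := (E.val.toRingHom).comp (F₁.val.toRingHom)
    set PM := P.map v1 with hPM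
    have hcoeff : PM.coeff n = E.val (F₁.val (P.coeff n)) := by
      rw [hPM, coeff_map]; rfl
    set q := minpoly K (⟨α₂, hα₂⟩ : ↥L₂) with hqdef
    have hq : q = minpoly K a₂ := by
      rw [hqdef, hminE a₂]
      exact (minpoly.algHom_eq L₂.val L₂.val.injective ⟨α₂, hα₂⟩).symm
    set qL := q.map (algebraMap K ↥L₂) with hqL
    have hqsplit : qL.Splits :=
      ((inferInstance : Normal K ↥L₂).splits ⟨α₂, hα₂⟩)
    have hbig : q.map (algebraMap K M) = qL.map (L₂.val.toRingHom) := by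
      rw [hqL, Polynomial.map_map]
      congr 1
    have hcomp : v1.comp (algebraMap K ↥F₁) = algebraMap K M := by
      ext c
      show E.val (F₁.val (algebraMap K ↥F₁ c)) = algebraMap K M c
      rw [IsScalarTower.algebraMap_apply K ↥E M, IsScalarTower.algebraMap_apply K ↥F₁ ↥E]
      rfl
    have hPdvd : P ∣ (minpoly K a₂).map (algebraMap K ↥F₁) :=
      minpoly.dvd_map_of_isScalarTower K ↥F₁ a₂
    have hPMdvd : PM ∣ q.map (algebraMap K M) := by
      have h2 := Polynomial.map_dvd v1 hPdvd
      rwa [Polynomial.map_map, hcomp, ← hq] at h2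
    have hbigne : q.map (algebraMap K M) ≠ 0 :=
      (Polynomial.map_ne_zero_iff (algebraMap K M).injective).2
        (minpoly.ne_zero (IsIntegral.of_finite K (⟨α₂, hα₂⟩ : ↥L₂)))
    have hvalsplit : (qL.map (L₂.val.toRingHom)).Splits := by
      exact hqsplit.map _
    have hbigsplit : (q.map (algebraMap K M)).Splits := by
      rw [hbig]
      exact hvalsplit
    have hPMsplit : PM.Splits :=
      hbigsplit.of_dvd hbigne hPMdvd
    have hroots : ∀ a ∈ PM.roots, a ∈ (algebraMap ↥L₂ M).range := by
      intro a ha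
      have h1 : a ∈ (q.map (algebraMap K M)).roots :=
        Multiset.mem_of_le (Polynomial.roots.le_of_dvd hbigne hPMdvd) ha
      rw [hbig, hqsplit.roots_map] at h1
      obtain ⟨s, -, rfl⟩ := Multiset.mem_map.1 h1
      exact ⟨s, rfl⟩
    have hmono : PM.Monic := (minpoly.monic hintF₁).map v1
    have hmems : PM ∈ Polynomial.lifts (algebraMap ↥L₂ M) :=
      hPMsplit.mem_lift_of_roots_mem_range hmono (algebraMap ↥L₂ M) hroots
    have hL₂mem : E.val (F₁.val (P.coeff n)) ∈ L₂ := by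
      have h4 := (Polynomial.lifts_iff_coeff_lifts PM).1 hmems n
      rw [hcoeff] at h4
      obtain ⟨y, hy⟩ := h4
      rw [← hy]
      exact y.2
    have hL₁mem : E.val (F₁.val (P.coeff n)) ∈ L₁ := by
      have h5 := (myMemAdjoinMap (a := a₁)).1 (P.coeff n).2
      rwa [show ((a₁ : M)) = α₁ from rfl, hgenα₁] at h5
    refine (myMemAdjoinMap (a := a₀)).2 ?_
    rw [show ((a₀ : M)) = α₀ from rfl, hgenα₀]
    exact ⟨hL₁mem, hL₂mem⟩
  -- descend the minimal polynomial to A₀ = K⟮a₀⟯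
  set A₀ : IntermediateField K ↥E := adjoin K {a₀} with hA₀
  have ha₀F₁ : a₀ ∈ F₁ := by
    rw [ha₀eval]; exact myAevalMem (mem_adjoin_simple_self K a₁) h₁
  have hA₀F₁ : A₀ ≤ F₁ := by rw [hA₀, adjoin_simple_le_iff]; exact ha₀F₁
  let incl₀₁ : ↥A₀ →ₐ[K] ↥F₁ := IntermediateField.inclusion hA₀F₁
  have hPlift : P ∈ Polynomial.lifts incl₀₁.toRingHom := by
    rw [Polynomial.lifts_iff_coeff_lifts]
    intro n
    exact ⟨⟨F₁.val (P.coeff n), hC1 n⟩, Subtype.ext rfl⟩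
  have hintA₀ : IsIntegral ↥A₀ a₂ := (hintK a₂).tower_top
  obtain ⟨Q, hQmap, -, hQmonic⟩ :=
    Polynomial.lifts_and_degree_eq_and_monic hPlift (minpoly.monic hintF₁)
  have hcompA : (algebraMap ↥F₁ ↥E).comp incl₀₁.toRingHom = algebraMap ↥A₀ ↥E := by
    ext y
    rfl
  have haevalQ : Polynomial.aeval a₂ Q = 0 := by
    have h6 : Polynomial.aeval a₂ (Q.map incl₀₁.toRingHom) = 0 := by
      rw [hQmap]; exact minpoly.aeval ↥F₁ a₂
    rwa [Polynomial.aeval_def, Polynomial.eval₂_map, hcompA, ← Polynomial.aeval_def] at h6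
  have hdvd1 : minpoly ↥A₀ a₂ ∣ Q := minpoly.dvd ↥A₀ a₂ haevalQ
  have haevalmap : Polynomial.aeval a₂ ((minpoly ↥A₀ a₂).map incl₀₁.toRingHom) = 0 := by
    rw [Polynomial.aeval_def, Polynomial.eval₂_map, hcompA, ← Polynomial.aeval_def]
    exact minpoly.aeval ↥A₀ a₂
  have hdvd2 : P ∣ (minpoly ↥A₀ a₂).map incl₀₁.toRingHom := minpoly.dvd ↥F₁ a₂ haevalmap
  have hdvd3 : (minpoly ↥A₀ a₂).map incl₀₁.toRingHom ∣ P := by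
    rw [← hQmap]; exact Polynomial.map_dvd _ hdvd1
  have hC3 : P = (minpoly ↥A₀ a₂).map incl₀₁.toRingHom :=
    Polynomial.eq_of_monic_of_associated (minpoly.monic hintF₁)
      ((minpoly.monic hintA₀).map _) (associated_of_dvd_dvd hdvd2 hdvd3)
  -- the second embedding, of K⟮a₂⟯
  let e₂ := minpoly.algEquiv (hintK a₂).isAlgebraic hminE₂
  let g₂ : ↥(adjoin K {a₂}) →ₐ[K] ↥E := (adjoin K {b₂}).val.comp e₂.toAlgHom
  have hg₂gen : g₂ (AdjoinSimple.gen K a₂) = b₂ := by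
    show (adjoin K {b₂}).val (e₂ (AdjoinSimple.gen K a₂)) = b₂
    rw [minpoly.algEquiv_apply]
    rfl
  have ha₀G₂ : a₀ ∈ adjoin K {a₂} := by
    rw [ha₀eval₂]; exact myAevalMem (mem_adjoin_simple_self K a₂) h₂
  have hA₀G₂ : A₀ ≤ adjoin K {a₂} := by rw [hA₀, adjoin_simple_le_iff]; exact ha₀G₂
  let incl₀₂ : ↥A₀ →ₐ[K] ↥(adjoin K {a₂}) := IntermediateField.inclusion hA₀G₂
  have hj : gAlg.comp incl₀₁ = g₂.comp incl₀₂ := by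
    apply myAlgHomExt (hintK a₀)
    have h7 : incl₀₁ (AdjoinSimple.gen K a₀) = aeval (AdjoinSimple.gen K a₁) h₁ := by
      apply Subtype.ext
      show (a₀ : ↥E) = ((aeval (AdjoinSimple.gen K a₁) h₁ : ↥F₁) : ↥E)
      rw [ha₀eval]
      exact aeval_algHom_apply F₁.val (AdjoinSimple.gen K a₁) h₁
    have h7' : incl₀₂ (AdjoinSimple.gen K a₀) = aeval (AdjoinSimple.gen K a₂) h₂ := by
      apply Subtype.ext
      show (a₀ : ↥E) = ((aeval (AdjoinSimple.gen K a₂) h₂ : ↥(adjoin K {a₂})) : ↥E)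
      rw [ha₀eval₂]
      exact aeval_algHom_apply (adjoin K {a₂}).val (AdjoinSimple.gen K a₂) h₂
    show gAlg (incl₀₁ (AdjoinSimple.gen K a₀)) = g₂ (incl₀₂ (AdjoinSimple.gen K a₀))
    rw [h7, h7', ← aeval_algHom_apply gAlg (AdjoinSimple.gen K a₁) h₁,
      ← aeval_algHom_apply g₂ (AdjoinSimple.gen K a₂) h₂, hg_gen, hg₂gen,
      ← hb₀eval, ← hb₀eval₂]
  have hroot : Polynomial.eval₂ gAlg.toRingHom b₂ P = 0 := by
    rw [hC3, Polynomial.eval₂_map]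
    have hcompj : gAlg.toRingHom.comp incl₀₁.toRingHom = g₂.toRingHom.comp incl₀₂.toRingHom := by
      have : (gAlg.comp incl₀₁).toRingHom = (g₂.comp incl₀₂).toRingHom := by rw [hj]
      exact this
    rw [hcompj]
    have h9 : Polynomial.eval₂ incl₀₂.toRingHom (AdjoinSimple.gen K a₂) (minpoly ↥A₀ a₂) = 0 := by
      apply Subtype.val_injective
      show ((Polynomial.eval₂ incl₀₂.toRingHom (AdjoinSimple.gen K a₂)
        (minpoly ↥A₀ a₂) : ↥(adjoin K {a₂})) : ↥E) = ((0 : ↥(adjoin K {a₂})) : ↥E)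
      have h10 := Polynomial.hom_eval₂ (minpoly ↥A₀ a₂) incl₀₂.toRingHom
        (adjoin K {a₂}).val.toRingHom (AdjoinSimple.gen K a₂)
      have h11 : (adjoin K {a₂}).val.toRingHom.comp incl₀₂.toRingHom = algebraMap ↥A₀ ↥E := by
        ext y; rfl
      rw [h11] at h10
      show (adjoin K {a₂}).val.toRingHom (Polynomial.eval₂ incl₀₂.toRingHom
        (AdjoinSimple.gen K a₂) (minpoly ↥A₀ a₂)) = 0
      rw [h10]
      show Polynomial.eval₂ (algebraMap ↥A₀ ↥E) a₂ (minpoly ↥A₀ a₂) = 0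
      rw [← Polynomial.aeval_def]
      exact minpoly.aeval ↥A₀ a₂
    have h12 := Polynomial.hom_eval₂ (minpoly ↥A₀ a₂) incl₀₂.toRingHom g₂.toRingHom
      (AdjoinSimple.gen K a₂)
    rw [h9, map_zero] at h12
    have h13 : g₂.toRingHom (AdjoinSimple.gen K a₂) = b₂ := hg₂gen
    rw [h13] at h12
    exact h12.symm
  -- E is generated over F₁ by a₂
  have htopsup : F₁ ⊔ adjoin K {a₂} = (⊤ : IntermediateField K ↥E) := by
    apply IntermediateField.map_injective E.val
    rw [IntermediateField.map_sup, hF₁, IntermediateField.adjoin_map,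
      IntermediateField.adjoin_map, Set.image_singleton, Set.image_singleton,
      show (E.val a₁) = α₁ from rfl, show (E.val a₂) = α₂ from rfl, hgenα₁, hgenα₂,
      ← AlgHom.fieldRange_eq_map, fieldRange_val]
  have htop : adjoin (↥F₁) {a₂} = (⊤ : IntermediateField ↥F₁ ↥E) := by
    apply IntermediateField.restrictScalars_injective K
    rw [IntermediateField.restrictScalars_top, restrictScalars_adjoin_eq_sup]
    exact htopsup
  let ε : AdjoinRoot P ≃ₐ[↥F₁] ↥E :=
    ((adjoinRootEquivAdjoin ↥F₁ hintF₁).trans (equivOfEq htop)).trans topEquiv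
  have hεroot : ε (AdjoinRoot.root P) = a₂ := by
    show topEquiv (equivOfEq htop (adjoinRootEquivAdjoin ↥F₁ hintF₁ (AdjoinRoot.root P))) = a₂
    rw [adjoinRootEquivAdjoin_apply_root]
    rfl
  let liftg := AdjoinRoot.lift gAlg.toRingHom b₂ hroot
  let Φ : ↥E →+* ↥E := liftg.comp ((ε.symm : ↥E ≃ₐ[↥F₁] AdjoinRoot P).toAlgHom.toRingHom)
  have hΦalg : ∀ y : ↥F₁, Φ (algebraMap ↥F₁ ↥E y) = gAlg y := by
    intro y
    show liftg (ε.symm (algebraMap ↥F₁ ↥E y)) = gAlg y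
    rw [AlgEquiv.commutes, AdjoinRoot.algebraMap_eq]
    exact AdjoinRoot.lift_of hroot
  let φ : ↥E →ₐ[K] ↥E :=
    { toRingHom := Φ,
      commutes' := by
        intro c
        show Φ (algebraMap K ↥E c) = algebraMap K ↥E c
        rw [IsScalarTower.algebraMap_apply K ↥F₁ ↥E c, hΦalg]
        exact gAlg.commutes c }
  have hφa₂ : φ a₂ = b₂ := by
    show liftg (ε.symm a₂) = b₂
    have h10 : ε.symm a₂ = AdjoinRoot.root P := by
      rw [← hεroot, AlgEquiv.symm_apply_apply]
    rw [h10]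
    exact AdjoinRoot.lift_root hroot
  have hφa₁ : φ a₁ = b₁ := by
    have h11 : a₁ = algebraMap ↥F₁ ↥E (AdjoinSimple.gen K a₁) :=
      (AdjoinSimple.algebraMap_gen (↥E) a₁).symm
    show Φ a₁ = b₁
    rw [h11, hΦalg, hg_gen]
  haveI : Algebra.IsAlgebraic K ↥E := Algebra.IsAlgebraic.of_finite K ↥E
  refine ⟨AlgEquiv.ofBijective φ (Algebra.IsAlgebraic.algHom_bijective φ), ?_, ?_⟩
  · show (φ a₁ : M) = β₁
    rw [hφa₁]
  · show (φ a₂ : M) = β₂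
    rw [hφa₂]

set_option maxHeartbeats 1000000 in
set_option synthInstance.maxHeartbeats 400000 in
private lemma mainGlue
    {K M : Type*} [Field K] [Field M] [Algebra K M]
    (L₁ : IntermediateField K M) [FiniteDimensional K L₁]
    (E' : IntermediateField K M) (hle : L₁ ≤ E')
    {m₁ : ℕ}
    (σ₁ τ₁ : Fin m₁ → (L₁ ≃ₐ[K] L₁))
    {α₁ β₁ : M}
    (hα₁ : α₁ ∈ L₁) (hβ₁ : β₁ ∈ L₁)
    (hgenα₁ : adjoin K {α₁} = L₁)
    (hcode₁ : ∀ i, ∃ g : K[X],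
      ((σ₁ i ⟨α₁, hα₁⟩ : L₁) : M) = aeval α₁ g ∧
      ((τ₁ i ⟨β₁, hβ₁⟩ : L₁) : M) = aeval β₁ g)
    (ρ : ↥E' ≃ₐ[K] ↥E')
    (hρ1 : (ρ ⟨α₁, hle hα₁⟩ : M) = β₁) :
    (∀ (x : M) (hx : x ∈ L₁),
        ((ρ ⟨x, hle hx⟩ : ↥E') : M) ∈ L₁) ∧
      (∀ (i : Fin m₁) (x : M) (hx : x ∈ L₁)
          (hρx : ((ρ ⟨x, hle hx⟩ : ↥E') : M) ∈ L₁),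
        ((τ₁ i ⟨_, hρx⟩ : L₁) : M) =
          ((ρ ⟨((σ₁ i ⟨x, hx⟩ : L₁) : M),
              hle (σ₁ i ⟨x, hx⟩).2⟩ : ↥E') : M)) := by
  let θ₁ : ↥L₁ →ₐ[K] M :=
    E'.val.comp (ρ.toAlgHom.comp (IntermediateField.inclusion hle))
  have hθ : ∀ (x : M) (hx : x ∈ L₁),
      θ₁ ⟨x, hx⟩ = ((ρ ⟨x, hle hx⟩ : ↥E') : M) := by
    intro x hx
    show ((ρ (IntermediateField.inclusion hle ⟨x, hx⟩) : ↥E') : M) = _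
    rw [show IntermediateField.inclusion hle ⟨x, hx⟩ =
      (⟨x, hle hx⟩ : ↥E') from Subtype.ext rfl]
  have hθ₁gen : θ₁ ⟨α₁, hα₁⟩ = β₁ := by rw [hθ α₁ hα₁]; exact hρ1
  have hintα₁ : IsIntegral K α₁ :=
    (IsIntegral.of_finite K (⟨α₁, hα₁⟩ : ↥L₁)).map L₁.val
  -- ρ maps L₁ into L₁
  have hmapsto₁ : ∀ y : ↥L₁, θ₁ y ∈ L₁ := by
    have hgen' : adjoin K {(⟨α₁, hα₁⟩ : ↥L₁)} = (⊤ : IntermediateField K ↥L₁) := by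
      apply IntermediateField.map_injective L₁.val
      rw [IntermediateField.adjoin_map, Set.image_singleton,
        show (L₁.val ⟨α₁, hα₁⟩) = α₁ from rfl, hgenα₁,
        ← AlgHom.fieldRange_eq_map, fieldRange_val]
    intro y
    let T : IntermediateField K ↥L₁ :=
      (L₁.toSubalgebra.comap θ₁).toIntermediateField (by
        intro z hz
        show θ₁ z⁻¹ ∈ L₁
        rw [map_inv₀]
        exact L₁.inv_mem hz)
    have h1 : adjoin K {(⟨α₁, hα₁⟩ : ↥L₁)} ≤ T := by
      rw [adjoin_simple_le_iff]
      show θ₁ ⟨α₁, hα₁⟩ ∈ L₁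
      rw [hθ₁gen]
      exact hβ₁
    rw [hgen'] at h1
    exact h1 trivial
  let r₁ : ↥L₁ →ₐ[K] ↥L₁ := AlgHom.codRestrict θ₁ L₁.toSubalgebra hmapsto₁
  have hr₁coe : ∀ y : ↥L₁, (r₁ y : M) = θ₁ y := fun y => rfl
  constructor
  · intro x hx
    have h2 := hmapsto₁ ⟨x, hx⟩
    rwa [hθ x hx] at h2
  · intro i x hx hρx
    obtain ⟨gp, hgp1, hgp2⟩ := hcode₁ i
    let f : ↥L₁ →ₐ[K] M := L₁.val.comp ((τ₁ i).toAlgHom.comp r₁)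
    have hfapp : ∀ y : ↥L₁, f y = L₁.val (τ₁ i (r₁ y)) := fun y => rfl
    let g : ↥L₁ →ₐ[K] M := θ₁.comp (σ₁ i).toAlgHom
    have hgapp : ∀ y : ↥L₁, g y = θ₁ (σ₁ i y) := fun y => rfl
    have hfg : f = g := by
      have hgeq : (equivOfEq hgenα₁) (AdjoinSimple.gen K α₁) = ⟨α₁, hα₁⟩ :=
        Subtype.ext rfl
      have key : f.comp (equivOfEq hgenα₁).toAlgHom = g.comp (equivOfEq hgenα₁).toAlgHom := by
        apply myAlgHomExt hintα₁
        show f ((equivOfEq hgenα₁) (AdjoinSimple.gen K α₁)) =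
          g ((equivOfEq hgenα₁) (AdjoinSimple.gen K α₁))
        rw [hgeq, hfapp, hgapp]
        have hr₁α : r₁ ⟨α₁, hα₁⟩ = ⟨β₁, hβ₁⟩ :=
          Subtype.ext (by rw [hr₁coe]; exact hθ₁gen)
        have hσval : σ₁ i ⟨α₁, hα₁⟩ = aeval (⟨α₁, hα₁⟩ : ↥L₁) gp := by
          apply Subtype.ext
          rw [hgp1]
          exact aeval_algHom_apply L₁.val (⟨α₁, hα₁⟩ : ↥L₁) gp
        rw [hr₁α, hσval, ← aeval_algHom_apply θ₁ (⟨α₁, hα₁⟩ : ↥L₁) gp, hθ₁gen]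
        exact hgp2
      apply AlgHom.ext
      intro y
      have h2 := congrFun (congrArg (DFunLike.coe) key) ((equivOfEq hgenα₁).symm y)
      simpa only [AlgHom.coe_comp, Function.comp_apply, AlgEquiv.coe_algHom,
        AlgEquiv.apply_symm_apply] using h2
    have hr₁x : r₁ ⟨x, hx⟩ =
        ⟨((ρ ⟨x, hle hx⟩ : ↥E') : M), hρx⟩ :=
      Subtype.ext (by rw [hr₁coe]; exact hθ x hx)
    have hstep1 : ((τ₁ i ⟨_, hρx⟩ : L₁) : M) = f ⟨x, hx⟩ := by
      rw [hfapp, hr₁x]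
      rfl
    have hstep2 : g ⟨x, hx⟩ =
        ((ρ ⟨((σ₁ i ⟨x, hx⟩ : L₁) : M),
          hle (σ₁ i ⟨x, hx⟩).2⟩ : ↥E') : M) := by
      rw [hgapp]
      exact hθ _ (σ₁ i ⟨x, hx⟩).2
    rw [hstep1, hfg, hstep2]



open Polynomial in
/-- Let `L₁`, `L₂` be finite Galois extensions of `K` (inside `M`),
`L₀ = L₁ ∩ L₂`, and suppose one and the same tuple is a 2-code both for
`(L₁, L₂, σ₁, σ₂, α₀, α₁, α₂)` and for `(L₁, L₂, τ₁, τ₂, β₀, β₁, β₂)`.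
Sharing the same code is expressed field-theoretically: `αᵢ` and `βᵢ` are
generators with the same minimal polynomial, each `σᵢ` and the corresponding
`τᵢ` act on `αᵢ`, `βᵢ` via the same polynomial over `K` (same coordinates in
the respective power bases), and `α₀`, `β₀` are the same polynomial expression
in `α₁, β₁` (resp. `α₂, β₂`) and generate `L₀`.  Then there exists
`ρ ∈ Gal(L₁L₂/K)` stabilising `L₁` and `L₂` such that
`τ₁ = ρ|_{L₁} σ₁ ρ|_{L₁}⁻¹` and `τ₂ = ρ|_{L₂} σ₂ ρ|_{L₂}⁻¹` (componentwise,
expressed by `τᵢ ∘ ρ = ρ ∘ σᵢ` on `Lᵢ`). -/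
theorem two_code_determines_tuple_up_to_conjugation
    (K M : Type*) [Field K] [Field M] [Algebra K M]
    (L₁ L₂ : IntermediateField K M)
    [FiniteDimensional K L₁] [FiniteDimensional K L₂]
    [IsGalois K L₁] [IsGalois K L₂]
    (m₁ m₂ : ℕ)
    (σ₁ τ₁ : Fin m₁ → (L₁ ≃ₐ[K] L₁)) (σ₂ τ₂ : Fin m₂ → (L₂ ≃ₐ[K] L₂))
    (α₀ α₁ α₂ β₀ β₁ β₂ : M)
    (hα₁ : α₁ ∈ L₁) (hβ₁ : β₁ ∈ L₁) (hα₂ : α₂ ∈ L₂) (hβ₂ : β₂ ∈ L₂)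
    (hgenα₁ : IntermediateField.adjoin K {α₁} = L₁)
    (hgenβ₁ : IntermediateField.adjoin K {β₁} = L₁)
    (hgenα₂ : IntermediateField.adjoin K {α₂} = L₂)
    (hgenβ₂ : IntermediateField.adjoin K {β₂} = L₂)
    (hgenα₀ : IntermediateField.adjoin K {α₀} = L₁ ⊓ L₂)
    (hgenβ₀ : IntermediateField.adjoin K {β₀} = L₁ ⊓ L₂)
    (hmin₁ : minpoly K α₁ = minpoly K β₁)
    (hmin₂ : minpoly K α₂ = minpoly K β₂)
    (hcode₁ : ∀ i, ∃ g : K[X],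
      ((σ₁ i ⟨α₁, hα₁⟩ : L₁) : M) = aeval α₁ g ∧
      ((τ₁ i ⟨β₁, hβ₁⟩ : L₁) : M) = aeval β₁ g)
    (hcode₂ : ∀ i, ∃ g : K[X],
      ((σ₂ i ⟨α₂, hα₂⟩ : L₂) : M) = aeval α₂ g ∧
      ((τ₂ i ⟨β₂, hβ₂⟩ : L₂) : M) = aeval β₂ g)
    (hc₀₁ : ∃ h : K[X], α₀ = aeval α₁ h ∧ β₀ = aeval β₁ h)
    (hc₀₂ : ∃ h : K[X], α₀ = aeval α₂ h ∧ β₀ = aeval β₂ h) :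
    ∃ ρ : ↥(L₁ ⊔ L₂) ≃ₐ[K] ↥(L₁ ⊔ L₂),
      (∀ (x : M) (hx : x ∈ L₁),
        ((ρ ⟨x, (le_sup_left : L₁ ≤ L₁ ⊔ L₂) hx⟩ : ↥(L₁ ⊔ L₂)) : M) ∈ L₁) ∧
      (∀ (x : M) (hx : x ∈ L₂),
        ((ρ ⟨x, (le_sup_right : L₂ ≤ L₁ ⊔ L₂) hx⟩ : ↥(L₁ ⊔ L₂)) : M) ∈ L₂) ∧
      (∀ (i : Fin m₁) (x : M) (hx : x ∈ L₁)
          (hρx : ((ρ ⟨x, (le_sup_left : L₁ ≤ L₁ ⊔ L₂) hx⟩ : ↥(L₁ ⊔ L₂)) : M) ∈ L₁),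
        ((τ₁ i ⟨_, hρx⟩ : L₁) : M) =
          ((ρ ⟨((σ₁ i ⟨x, hx⟩ : L₁) : M),
              (le_sup_left : L₁ ≤ L₁ ⊔ L₂) (σ₁ i ⟨x, hx⟩).2⟩ : ↥(L₁ ⊔ L₂)) : M)) ∧
      (∀ (i : Fin m₂) (x : M) (hx : x ∈ L₂)
          (hρx : ((ρ ⟨x, (le_sup_right : L₂ ≤ L₁ ⊔ L₂) hx⟩ : ↥(L₁ ⊔ L₂)) : M) ∈ L₂),
        ((τ₂ i ⟨_, hρx⟩ : L₂) : M) =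
          ((ρ ⟨((σ₂ i ⟨x, hx⟩ : L₂) : M),
              (le_sup_right : L₂ ≤ L₁ ⊔ L₂) (σ₂ i ⟨x, hx⟩).2⟩ : ↥(L₁ ⊔ L₂)) : M)) := by
  obtain ⟨ρ, hρ1, hρ2⟩ := existsAut L₁ L₂ hα₁ hβ₁ hα₂ hβ₂ hgenα₁ hgenα₂ hgenα₀
    hmin₁ hmin₂ hc₀₁ hc₀₂
  obtain ⟨hA, hC⟩ := mainGlue L₁ (L₁ ⊔ L₂) le_sup_left σ₁ τ₁ hα₁ hβ₁ hgenα₁ hcode₁ ρ hρ1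
  obtain ⟨hB, hD⟩ := mainGlue L₂ (L₁ ⊔ L₂) le_sup_right σ₂ τ₂ hα₂ hβ₂ hgenα₂ hcode₂ ρ hρ2
  exact ⟨ρ, hA, hB, hC, hD⟩
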